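/- Let 𝔤 be a Lie algebra over a field F of characteristic zero with involution θ and eigenspaces 𝔤(±1). If (e, f, h) is an sl₂-triple with e ∈ 𝔤(−1) and h ∈ 𝔤(1), and f = f₁ + f₋₁ is the eigenspace decomposition of f, then (e, f₋₁, h) is also an sl₂-triple, i.e. [e, f₋₁] = h, [h, f₋₁] = −2f₋₁, and [h, e] = 2e. -/

import Mathlib

/-- if (e, f, h) is an sl₂-triple with e ∈ 𝔤(−1) and h ∈ 𝔤(1), and
f = f₁ + f₋₁ is the eigenspace decomposition of f, then (e, f₋₁, h) is again an
sl₂-triple. -/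
theorem sl2_triple_replace_f_by_odd_part
    (F : Type*) [Field F] [CharZero F]
    (L : Type*) [LieRing L] [LieAlgebra F L]
    (θ : L →ₗ⁅F⁆ L) (hθ : ∀ x, θ (θ x) = x)
    (e f h f₁ fm₁ : L)
    (he0 : e ≠ 0) (hf0 : f ≠ 0) (hh0 : h ≠ 0)
    (t1 : ⁅h, e⁆ = (2 : F) • e) (t2 : ⁅h, f⁆ = -((2 : F) • f))
    (t3 : ⁅e, f⁆ = h)
    (hee : θ e = -e) (hhh : θ h = h)
    (hdec : f = f₁ + fm₁) (hf1 : θ f₁ = f₁) (hfm1 : θ fm₁ = -fm₁) :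
    ⁅e, fm₁⁆ = h ∧ ⁅h, fm₁⁆ = -((2 : F) • fm₁) ∧ ⁅h, e⁆ = (2 : F) • e := by
  have hθf : θ f = f₁ - fm₁ := by
    rw [hdec, map_add, hf1, hfm1, sub_eq_add_neg]
  have h2 : (2 : F) ≠ 0 := two_ne_zero
  have inj := smul_right_injective L h2
  have A : ⁅e, f₁⁆ + ⁅e, fm₁⁆ = h := by rw [← lie_add, ← hdec, t3]
  have B : -⁅e, f₁⁆ + ⁅e, fm₁⁆ = h := by
    have hb := congrArg θ t3
    rw [LieHom.map_lie, hee, hθf, hhh, neg_lie, lie_sub] at hb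
    linear_combination (norm := module) hb
  have e1 : ⁅e, fm₁⁆ = h := by
    apply inj
    linear_combination (norm := module) A + B
  have C : ⁅h, f₁⁆ + ⁅h, fm₁⁆ = -((2 : F) • f₁) + -((2 : F) • fm₁) := by
    have := t2
    rw [hdec, lie_add, smul_add] at this
    linear_combination (norm := module) this
  have D : ⁅h, f₁⁆ - ⁅h, fm₁⁆ = -((2 : F) • f₁) - -((2 : F) • fm₁) := by
    have hb := congrArg θ t2
    rw [LieHom.map_lie, hhh, hθf, map_neg, map_smul, hθf, lie_sub, smul_sub] at hb
    linear_combination (norm := module) hb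
  have e2 : ⁅h, fm₁⁆ = -((2 : F) • fm₁) := by
    apply inj
    linear_combination (norm := module) C - D
  exact ⟨e1, e2, t1⟩
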